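/- For the quadratic form F(x₁,…,x_N) = (1/(2Δt))Σ_{n=0}^{N-1}(x_{n+1}−x_n)² + g(x_N) (with x₀ = 0) with g convex and smooth, the Hessian H of F is positive definite, and in the pure Brownian case g″ ≥ 0 the (1,1) entry of H^{-1} satisfies (H^{-1})_{1,1} ≤ Δt, i.e., conditioning reduces the one-step variance relative to the unconditioned step variance Δt. -/

import Mathlib

open Matrix

/-- The Hessian of the discrete Brownian-motion action
`F(x₁,…,x_N) = (1/(2Δt)) Σ (x_{n+1}−x_n)² + g(x_N)` (with `x₀ = 0`): the tridiagonal
discrete Laplacian `(1/Δt)·tridiag(−1,2,−1)` with last diagonal entry `1/Δt + c`,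
where `c = g″(x_N) ≥ 0`. -/
noncomputable def pathHessian (N : ℕ) (Δt c : ℝ) : Matrix (Fin N) (Fin N) ℝ :=
  fun i j =>
    if i = j then (if (i : ℕ) = N - 1 then 1 / Δt + c else 2 / Δt)
    else if (i : ℕ) + 1 = (j : ℕ) ∨ (j : ℕ) + 1 = (i : ℕ) then -(1 / Δt) else 0

noncomputable def Dmat (N : ℕ) : Matrix (Fin N) (Fin N) ℝ :=
  fun i j => (if i = j then 1 else 0) - (if (j : ℕ) + 1 = (i : ℕ) then 1 else 0)

lemma DtD_apply (N : ℕ) (i j : Fin N) :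
    ((Dmat N)ᵀ * Dmat N) i j =
      ((if i = j then 1 else 0) - (if (j:ℕ)+1 = (i:ℕ) then 1 else 0)
        - (if (i:ℕ)+1 = (j:ℕ) then 1 else 0)
        + (if i = j ∧ (i:ℕ)+1 < N then 1 else 0) : ℝ) := by
  have S1 : (∑ k : Fin N, (if k = i then (1:ℝ) else 0) * (if k = j then 1 else 0))
      = (if i = j then 1 else 0) := by
    simp only [ite_mul, one_mul, zero_mul, Finset.sum_ite_eq', Finset.mem_univ, if_true]
  have S2 : (∑ k : Fin N, (if k = i then (1:ℝ) else 0) * (if (j:ℕ)+1=(k:ℕ) then 1 else 0))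
      = (if (j:ℕ)+1 = (i:ℕ) then 1 else 0) := by
    simp only [ite_mul, one_mul, zero_mul, Finset.sum_ite_eq', Finset.mem_univ, if_true]
  have S3 : (∑ k : Fin N, (if (i:ℕ)+1=(k:ℕ) then (1:ℝ) else 0) * (if k = j then 1 else 0))
      = (if (i:ℕ)+1 = (j:ℕ) then 1 else 0) := by
    simp only [mul_ite, mul_one, mul_zero, Finset.sum_ite_eq', Finset.mem_univ, if_true]
  have S4 : (∑ k : Fin N, (if (i:ℕ)+1=(k:ℕ) then (1:ℝ) else 0) * (if (j:ℕ)+1=(k:ℕ) then 1 else 0))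
      = (if i = j ∧ (i:ℕ)+1 < N then 1 else 0) := by
    by_cases h : (i:ℕ)+1 < N
    · have hk : ∀ k : Fin N, ((i:ℕ)+1=(k:ℕ)) ↔ k = ⟨(i:ℕ)+1, h⟩ := by
        intro k; rw [Fin.ext_iff]; exact eq_comm
      simp_rw [hk, ite_mul, one_mul, zero_mul]
      rw [Finset.sum_ite_eq' Finset.univ (⟨(i:ℕ)+1, h⟩ : Fin N)
        (fun k => if (j:ℕ)+1=(k:ℕ) then (1:ℝ) else 0)]
      simp only [Finset.mem_univ, if_true]
      by_cases hij : i = j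
      · subst hij; simp [h]
      · have : ¬ ((j:ℕ)+1 = (i:ℕ)+1) := by
          intro hh; exact hij (Fin.ext (by omega))
        simp [this, hij, Fin.val_inj, Ne.symm hij]
    · rw [Finset.sum_eq_zero, eq_comm, if_neg (by tauto)]
      intro k _
      have := k.isLt
      rw [if_neg (by omega)]
      ring
  simp only [Matrix.mul_apply, Matrix.transpose_apply, Dmat]
  simp only [sub_mul, mul_sub, Finset.sum_sub_distrib]
  rw [S1, S2, S3, S4]
  ring

noncomputable def Emat (N : ℕ) : Matrix (Fin N) (Fin N) ℝ :=
  fun i j => if (i:ℕ) = N-1 ∧ (j:ℕ) = N-1 then 1 else 0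

lemma hess_eq (N : ℕ) (hN : 1 ≤ N) (Δt c : ℝ) :
    pathHessian N Δt c = (1/Δt) • ((Dmat N)ᵀ * Dmat N) + c • Emat N := by
  ext i j
  have hi := i.isLt; have hj := j.isLt
  simp only [Matrix.add_apply, Matrix.smul_apply, DtD_apply, Emat, pathHessian,
    smul_eq_mul, Fin.ext_iff]
  split_ifs <;> first | ring1 | (exfalso; omega)

lemma Emat_quad (N : ℕ) (hN : 1 ≤ N) (x : Fin N → ℝ) :
    x ⬝ᵥ (Emat N *ᵥ x) = x ⟨N-1, by omega⟩ * x ⟨N-1, by omega⟩ := by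
  set la : Fin N := ⟨N-1, by omega⟩ with hla
  have hc : ∀ i : Fin N, ((i:ℕ) = N-1) ↔ i = la := by
    intro i; rw [Fin.ext_iff]
  simp only [Matrix.mulVec, dotProduct, Emat, hc, ite_and, ite_mul, one_mul,
    zero_mul, mul_ite, mul_zero]
  rw [Finset.sum_eq_single la]
  · simp [Finset.sum_ite_eq']
  · intro b _ hb; simp [hb]
  · simp

lemma quad (N : ℕ) (hN : 1 ≤ N) (Δt c : ℝ) (x : Fin N → ℝ) :
    x ⬝ᵥ (pathHessian N Δt c *ᵥ x) =
      (1/Δt) * ((Dmat N *ᵥ x) ⬝ᵥ (Dmat N *ᵥ x)) + c * (x ⟨N-1, by omega⟩ * x ⟨N-1, by omega⟩) := by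
  rw [hess_eq N hN Δt c, Matrix.add_mulVec, Matrix.smul_mulVec,
    Matrix.smul_mulVec, dotProduct_add, dotProduct_smul,
    dotProduct_smul, Emat_quad N hN x, smul_eq_mul, smul_eq_mul]
  congr 2
  rw [← Matrix.mulVec_mulVec, dotProduct_mulVec, Matrix.vecMul_transpose]

lemma mulVec_Dmat (N : ℕ) (x : Fin N → ℝ) (i : Fin N) :
    (Dmat N *ᵥ x) i = x i - (if h : 0 < (i:ℕ) then x ⟨(i:ℕ)-1, by have := i.isLt; omega⟩ else 0) := by
  have hi := i.isLt
  simp only [Matrix.mulVec, dotProduct, Dmat, sub_mul, ite_mul, one_mul, zero_mul,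
    Finset.sum_sub_distrib]
  congr 1
  · rw [Finset.sum_eq_single i]
    · simp
    · intro b _ hb; rw [if_neg (fun h => hb h.symm)]
    · simp
  · by_cases h : 0 < (i:ℕ)
    · have hk : ∀ j : Fin N, ((j:ℕ)+1 = (i:ℕ)) ↔ j = ⟨(i:ℕ)-1, by omega⟩ := by
        intro j; rw [Fin.ext_iff]; constructor <;> intro hh <;> simp at hh ⊢ <;> omega
      simp_rw [hk]
      simp [Finset.sum_ite_eq', h]
    · rw [Finset.sum_eq_zero, dif_neg h]
      intro j _
      rw [if_neg (by omega)]

lemma Dmat_inj (N : ℕ) (x : Fin N → ℝ) (h : Dmat N *ᵥ x = 0) : x = 0 := by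
  have key : ∀ n : ℕ, ∀ hn : n < N, x ⟨n, hn⟩ = 0 := by
    intro n
    induction n with
    | zero =>
      intro hn
      have h0 := congrFun h ⟨0, hn⟩
      rw [mulVec_Dmat] at h0
      simpa using h0
    | succ m ih =>
      intro hn
      have h0 := congrFun h ⟨m+1, hn⟩
      rw [mulVec_Dmat] at h0
      have hpos : 0 < ((⟨m+1, hn⟩ : Fin N) : ℕ) := by simp
      rw [dif_pos hpos, Pi.zero_apply] at h0
      have hm : x ⟨((⟨m+1, hn⟩ : Fin N) : ℕ) - 1, by have := (⟨m+1, hn⟩ : Fin N).isLt; omega⟩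
          = 0 := ih (by omega)
      rw [hm] at h0
      linarith
  funext i
  have := key i.val i.isLt
  simpa using this

lemma hess_posDef (N : ℕ) (hN : 1 ≤ N) (Δt : ℝ) (hΔt : 0 < Δt) (c : ℝ) (hc : 0 ≤ c) :
    (pathHessian N Δt c).PosDef := by
  refine Matrix.posDef_iff_dotProduct_mulVec.mpr ⟨?_, ?_⟩
  · show (pathHessian N Δt c)ᴴ = _
    ext i j
    simp only [Matrix.conjTranspose_apply, pathHessian, star_trivial, Fin.ext_iff]
    split_ifs <;> first | rfl | omega
  · intro x hx
    have hst : star x = x := by funext i; simp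
    rw [hst, quad N hN Δt c x]
    have hDx : Dmat N *ᵥ x ≠ 0 := fun h0 => hx (Dmat_inj N x h0)
    obtain ⟨i, hi⟩ := Function.ne_iff.mp hDx
    have hpos : 0 < (Dmat N *ᵥ x) ⬝ᵥ (Dmat N *ᵥ x) := by
      refine Finset.sum_pos' (fun k _ => mul_self_nonneg _) ⟨i, Finset.mem_univ i, ?_⟩
      exact mul_self_pos.mpr (by simpa using hi)
    have h1 : 0 < (1/Δt) * ((Dmat N *ᵥ x) ⬝ᵥ (Dmat N *ᵥ x)) :=
      mul_pos (by positivity) hpos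
    have h2 : 0 ≤ c * (x ⟨N-1, by omega⟩ * x ⟨N-1, by omega⟩) :=
      mul_nonneg hc (mul_self_nonneg _)
    linarith

/-- The Hessian `H` of the discrete action is positive definite, and when `g″ ≥ 0` the
`(1,1)` entry of `H⁻¹` satisfies `(H⁻¹)_{1,1} ≤ Δt`: conditioning reduces the one-step
variance relative to the unconditioned step variance `Δt`. -/
theorem hessian_posDef_and_inv_entry_le (N : ℕ) (hN : 1 ≤ N)
    (Δt : ℝ) (hΔt : 0 < Δt) (c : ℝ) (hc : 0 ≤ c) :
    (pathHessian N Δt c).PosDef ∧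
      (pathHessian N Δt c)⁻¹ ⟨0, by omega⟩ ⟨0, by omega⟩ ≤ Δt := by
  have hpd := hess_posDef N hN Δt hΔt c hc
  refine ⟨hpd, ?_⟩
  have hdet : IsUnit (pathHessian N Δt c).det :=
    isUnit_iff_ne_zero.mpr (ne_of_gt hpd.det_pos)
  have hmul : pathHessian N Δt c * (pathHessian N Δt c)⁻¹ = 1 :=
    Matrix.mul_nonsing_inv _ hdet
  set z : Fin N := ⟨0, by omega⟩ with hz
  set e : Fin N → ℝ := Pi.single z 1 with he
  set y : Fin N → ℝ := (pathHessian N Δt c)⁻¹ *ᵥ e with hy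
  have hHy : pathHessian N Δt c *ᵥ y = e := by
    rw [hy, Matrix.mulVec_mulVec, hmul, Matrix.one_mulVec]
  have hy0 : y z = (pathHessian N Δt c)⁻¹ z z := by
    rw [hy, he]
    simp [Matrix.mulVec_single]
  have hdot : y ⬝ᵥ (pathHessian N Δt c *ᵥ y) = y z := by
    rw [hHy, he]
    simp [dotProduct_single]
  rw [quad N hN Δt c y] at hdot
  have hDy0 : (Dmat N *ᵥ y) z = y z := by
    rw [mulVec_Dmat, dif_neg (by simp [hz])]
    ring
  have hsum : (Dmat N *ᵥ y) z * (Dmat N *ᵥ y) z ≤ (Dmat N *ᵥ y) ⬝ᵥ (Dmat N *ᵥ y) := by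
    exact Finset.single_le_sum (f := fun k => (Dmat N *ᵥ y) k * (Dmat N *ᵥ y) k)
      (fun k _ => mul_self_nonneg _) (Finset.mem_univ z)
  rw [hDy0] at hsum
  have h2 : 0 ≤ c * (y ⟨N-1, by omega⟩ * y ⟨N-1, by omega⟩) :=
    mul_nonneg hc (mul_self_nonneg _)
  have hineq : (1/Δt) * (y z * y z) ≤ y z := by
    have := mul_le_mul_of_nonneg_left hsum (le_of_lt (by positivity : (0:ℝ) < 1/Δt))
    linarith
  have ht2 : y z * y z ≤ Δt * y z := by
    have h3 := mul_le_mul_of_nonneg_left hineq hΔt.le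
    rw [← mul_assoc, mul_one_div_cancel (ne_of_gt hΔt), one_mul] at h3
    linarith
  rw [← hy0]
  nlinarith [ht2, hΔt]
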